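/- Let a_r = max over nonzero w ∈ U_r of ‖A w‖_{U'}/‖A w‖_{U_r'}, and suppose Θ is a U → ℓ2 ε-subspace embedding for Y_r = U_r + span{R_U^{-1}(b − A x) : x ∈ U_r}. Then α_r^Θ ≥ (1/√(1+ε))(1 − ε a_r) α_r and β_r^Θ ≤ (1/√(1−ε))(β_r + ε β), where α_r, β_r are the Galerkin quasi-optimality constants, β = max_{x ∈ U\{0}} ‖A x‖_{U'}/‖x‖_U, and α_r^Θ, β_r^Θ are the corresponding sketched constants defined with the seminorm ‖y‖_{U_r'}^Θ = max_{x ∈ U_r\{0}} |⟨Θ R_U^{-1} y, Θ x⟩|/‖Θx‖. -/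

import Mathlib

open Matrix BigOperators

noncomputable section

/-- Inner product induced by `R`: `⟨x,y⟩_U = ⟨R x, y⟩`. -/
def ipR {n : ℕ} (R : Matrix (Fin n) (Fin n) ℝ) (x y : Fin n → ℝ) : ℝ :=
  R.mulVec x ⬝ᵥ y

/-- Norm induced by `R`. -/
def normR {n : ℕ} (R : Matrix (Fin n) (Fin n) ℝ) (x : Fin n → ℝ) : ℝ :=
  Real.sqrt (ipR R x x)

/-- Euclidean norm. -/
def norm2 {m : ℕ} (v : Fin m → ℝ) : ℝ :=
  Real.sqrt (v ⬝ᵥ v)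

/-- Dual norm `‖y‖_{U'}` induced by `⟨·, R⁻¹ ·⟩`. -/
def normDual {n : ℕ} (R : Matrix (Fin n) (Fin n) ℝ) (y : Fin n → ℝ) : ℝ :=
  Real.sqrt (y ⬝ᵥ R⁻¹.mulVec y)

/-- Dual seminorm `‖y‖_{Z'} = sup_{w ∈ Z, w ≠ 0} |⟨y,w⟩|/‖w‖_U`. -/
def dualSemi {n : ℕ} (R : Matrix (Fin n) (Fin n) ℝ) (Z : Submodule ℝ (Fin n → ℝ))
    (y : Fin n → ℝ) : ℝ :=
  ⨆ w : Z, |y ⬝ᵥ (w : Fin n → ℝ)| / normR R (w : Fin n → ℝ)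

/-- Sketched dual seminorm `‖y‖_{Z'}^Θ = sup_{w ∈ Z, w ≠ 0} |⟨Θ R⁻¹ y, Θ w⟩|/‖Θ w‖`. -/
def skDualSemi {n k : ℕ} (R : Matrix (Fin n) (Fin n) ℝ) (Θ : Matrix (Fin k) (Fin n) ℝ)
    (Z : Submodule ℝ (Fin n → ℝ)) (y : Fin n → ℝ) : ℝ :=
  ⨆ w : Z, |(Θ.mulVec (R⁻¹.mulVec y)) ⬝ᵥ (Θ.mulVec (w : Fin n → ℝ))| /
      norm2 (Θ.mulVec (w : Fin n → ℝ))

/-- `i`-th column of a matrix as a vector. -/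
def colV {n m : ℕ} (M : Matrix (Fin n) (Fin m) ℝ) (i : Fin m) : Fin n → ℝ :=
  fun j => M j i

/-- Squared Frobenius norm. -/
def frob2 {a b : ℕ} (M : Matrix (Fin a) (Fin b) ℝ) : ℝ :=
  ∑ i, ∑ j, (M i j) ^ 2

lemma cs_aux {qx qy ip : ℝ} (hqx : 0 ≤ qx) (hqy : 0 ≤ qy)
    (h : ∀ t : ℝ, 0 ≤ qy * (t * t) + (2 * ip) * t + qx) :
    |ip| ≤ Real.sqrt qx * Real.sqrt qy := by
  have hd := discrim_le_zero h
  rw [discrim] at hd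
  have h2 : ip ^ 2 ≤ qx * qy := by nlinarith
  calc |ip| = Real.sqrt (ip ^ 2) := (Real.sqrt_sq_eq_abs ip).symm
    _ ≤ Real.sqrt (qx * qy) := Real.sqrt_le_sqrt h2
    _ = Real.sqrt qx * Real.sqrt qy := Real.sqrt_mul hqx qy

lemma dot_self_nonneg {m : ℕ} (v : Fin m → ℝ) : 0 ≤ v ⬝ᵥ v :=
  Finset.sum_nonneg fun i _ => mul_self_nonneg _

lemma norm2_nonneg {m : ℕ} (v : Fin m → ℝ) : 0 ≤ norm2 v := Real.sqrt_nonneg _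

lemma norm2_sq {m : ℕ} (v : Fin m → ℝ) : norm2 v ^ 2 = v ⬝ᵥ v :=
  Real.sq_sqrt (dot_self_nonneg v)

lemma cs_dot {m : ℕ} (x y : Fin m → ℝ) : |x ⬝ᵥ y| ≤ norm2 x * norm2 y := by
  apply cs_aux (dot_self_nonneg x) (dot_self_nonneg y)
  intro t
  have h := dot_self_nonneg (x + t • y)
  have : (x + t • y) ⬝ᵥ (x + t • y)
      = (y ⬝ᵥ y) * (t * t) + (2 * (x ⬝ᵥ y)) * t + x ⬝ᵥ x := by
    simp [add_dotProduct, dotProduct_add, smul_dotProduct, dotProduct_smul,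
      dotProduct_comm y x, smul_eq_mul]
    ring
  linarith [this ▸ h]

section posdef
variable {n : ℕ} {R : Matrix (Fin n) (Fin n) ℝ}

lemma ipR_symm (hR : R.PosDef) (x y : Fin n → ℝ) : ipR R x y = ipR R y x := by
  have hRt : Rᵀ = R := by
    have := hR.1
    rwa [Matrix.IsHermitian, conjTranspose_eq_transpose_of_trivial] at this
  unfold ipR
  rw [dotProduct_comm (R.mulVec x) y, dotProduct_mulVec,
    ← Matrix.mulVec_transpose, hRt]

lemma ipR_self_nonneg (hR : R.PosDef) (x : Fin n → ℝ) : 0 ≤ ipR R x x := by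
  have := hR.posSemidef.dotProduct_mulVec_nonneg x
  simpa [ipR, dotProduct_comm] using this

lemma normR_nonneg (x : Fin n → ℝ) : 0 ≤ normR R x := Real.sqrt_nonneg _

lemma normR_sq (hR : R.PosDef) (x : Fin n → ℝ) : normR R x ^ 2 = ipR R x x :=
  Real.sq_sqrt (ipR_self_nonneg hR x)

lemma normR_pos (hR : R.PosDef) {x : Fin n → ℝ} (hx : x ≠ 0) : 0 < normR R x := by
  apply Real.sqrt_pos.2
  have := hR.dotProduct_mulVec_pos hx
  simpa [ipR, dotProduct_comm] using this

lemma cs_ipR (hR : R.PosDef) (x y : Fin n → ℝ) : |ipR R x y| ≤ normR R x * normR R y := by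
  apply cs_aux (ipR_self_nonneg hR x) (ipR_self_nonneg hR y)
  intro t
  have h := ipR_self_nonneg hR (x + t • y)
  have : ipR R (x + t • y) (x + t • y)
      = ipR R y y * (t * t) + (2 * ipR R x y) * t + ipR R x x := by
    simp [ipR, mulVec_add, mulVec_smul, add_dotProduct, dotProduct_add,
      smul_dotProduct, dotProduct_smul, smul_eq_mul]
    have := ipR_symm (R := R) hR x y
    simp only [ipR] at this
    linear_combination (-t) * this
  linarith [this ▸ h]

lemma R_mul_inv (hR : R.PosDef) : R * R⁻¹ = 1 := Matrix.mul_nonsing_inv R hR.det_pos.ne'.isUnit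

lemma mulVec_inv_cancel (hR : R.PosDef) (y : Fin n → ℝ) : R.mulVec (R⁻¹.mulVec y) = y := by
  rw [Matrix.mulVec_mulVec, R_mul_inv hR, Matrix.one_mulVec]

lemma ipR_inv (hR : R.PosDef) (y w : Fin n → ℝ) : ipR R (R⁻¹.mulVec y) w = y ⬝ᵥ w := by
  rw [ipR, mulVec_inv_cancel hR]

lemma normDual_eq (hR : R.PosDef) (y : Fin n → ℝ) : normDual R y = normR R (R⁻¹.mulVec y) := by
  rw [normDual, normR, ipR, mulVec_inv_cancel hR]

end posdef

lemma div_abs_le {num den M : ℝ} (hM : 0 ≤ M) (hden : 0 ≤ den) (h : |num| ≤ M * den) :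
    |num| / den ≤ M := by
  rcases hden.eq_or_lt with h0 | h0
  · rw [← h0, div_zero]; exact hM
  · rw [div_le_iff₀ h0]; exact h

lemma bdd_dual {n : ℕ} {R : Matrix (Fin n) (Fin n) ℝ} (hR : R.PosDef)
    (Z : Submodule ℝ (Fin n → ℝ)) (y : Fin n → ℝ) :
    BddAbove (Set.range fun w : Z =>
      |y ⬝ᵥ (w : Fin n → ℝ)| / normR R (w : Fin n → ℝ)) := by
  refine ⟨normR R (R⁻¹.mulVec y), ?_⟩
  rintro _ ⟨w, rfl⟩
  apply div_abs_le (normR_nonneg _) (normR_nonneg _)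
  rw [← ipR_inv hR]
  exact cs_ipR hR _ _

lemma bdd_sk {n k : ℕ} (R : Matrix (Fin n) (Fin n) ℝ) (Θ : Matrix (Fin k) (Fin n) ℝ)
    (Z : Submodule ℝ (Fin n → ℝ)) (y : Fin n → ℝ) :
    BddAbove (Set.range fun w : Z =>
      |(Θ.mulVec (R⁻¹.mulVec y)) ⬝ᵥ (Θ.mulVec (w : Fin n → ℝ))| /
        norm2 (Θ.mulVec (w : Fin n → ℝ))) := by
  refine ⟨norm2 (Θ.mulVec (R⁻¹.mulVec y)), ?_⟩
  rintro _ ⟨w, rfl⟩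
  exact div_abs_le (norm2_nonneg _) (norm2_nonneg _) (cs_dot _ _)

lemma le_dualSemi {n : ℕ} {R : Matrix (Fin n) (Fin n) ℝ} (hR : R.PosDef)
    (Z : Submodule ℝ (Fin n → ℝ)) (y : Fin n → ℝ) (w : Z) :
    |y ⬝ᵥ (w : Fin n → ℝ)| / normR R (w : Fin n → ℝ) ≤ dualSemi R Z y :=
  le_ciSup (bdd_dual hR Z y) w

lemma le_skDualSemi {n k : ℕ} (R : Matrix (Fin n) (Fin n) ℝ) (Θ : Matrix (Fin k) (Fin n) ℝ)
    (Z : Submodule ℝ (Fin n → ℝ)) (y : Fin n → ℝ) (w : Z) :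
    |(Θ.mulVec (R⁻¹.mulVec y)) ⬝ᵥ (Θ.mulVec (w : Fin n → ℝ))| /
        norm2 (Θ.mulVec (w : Fin n → ℝ)) ≤ skDualSemi R Θ Z y :=
  le_ciSup (bdd_sk R Θ Z y) w

lemma dualSemi_nonneg {n : ℕ} {R : Matrix (Fin n) (Fin n) ℝ} (hR : R.PosDef)
    (Z : Submodule ℝ (Fin n → ℝ)) (y : Fin n → ℝ) : 0 ≤ dualSemi R Z y := by
  have h := le_dualSemi hR Z y ⟨0, Z.zero_mem⟩
  simpa using h

lemma skDualSemi_nonneg {n k : ℕ} {R : Matrix (Fin n) (Fin n) ℝ} (hR : R.PosDef)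
    (Θ : Matrix (Fin k) (Fin n) ℝ)
    (Z : Submodule ℝ (Fin n → ℝ)) (y : Fin n → ℝ) : 0 ≤ skDualSemi R Θ Z y := by
  have h := le_skDualSemi R Θ Z y ⟨0, Z.zero_mem⟩
  simpa [Matrix.mulVec_zero] using h

/-- Bounds on the sketched quasi-optimality constants `α_r^Θ` and `β_r^Θ` in terms of
the exact constants, provided `Θ` is an ε-embedding for
`Y_r = U_r + span{R⁻¹(b - A x) : x ∈ U_r}`. -/
theorem sketched_constants_bounds {n k : ℕ} (R A : Matrix (Fin n) (Fin n) ℝ)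
    (hR : R.PosDef) (Θ : Matrix (Fin k) (Fin n) ℝ)
    (b u : Fin n → ℝ) (hu : A.mulVec u = b)
    (Ur : Submodule ℝ (Fin n → ℝ))
    (ε a αr βr β : ℝ) (hε0 : 0 ≤ ε) (hε1 : ε < 1) (ha0 : 0 ≤ a) (hαr0 : 0 ≤ αr)
    (hemb : ∀ x ∈ Ur ⊔ Submodule.span ℝ
        ((fun x => R⁻¹.mulVec (b - A.mulVec x)) '' (Ur : Set (Fin n → ℝ))),
      ∀ y ∈ Ur ⊔ Submodule.span ℝ
        ((fun x => R⁻¹.mulVec (b - A.mulVec x)) '' (Ur : Set (Fin n → ℝ))),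
      |ipR R x y - (Θ.mulVec x) ⬝ᵥ (Θ.mulVec y)| ≤ ε * normR R x * normR R y)
    (ha : ∀ w ∈ Ur, normDual R (A.mulVec w) ≤ a * dualSemi R Ur (A.mulVec w))
    (hαr : ∀ x ∈ Ur, αr * normR R x ≤ dualSemi R Ur (A.mulVec x))
    (hβr : ∀ x ∈ Submodule.span ℝ {u} ⊔ Ur,
      dualSemi R Ur (A.mulVec x) ≤ βr * normR R x)
    (hβ : ∀ x : Fin n → ℝ, normDual R (A.mulVec x) ≤ β * normR R x) :
    (∀ x ∈ Ur,
      (1 / Real.sqrt (1 + ε)) * ((1 - ε * a) * αr) * normR R x ≤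
        skDualSemi R Θ Ur (A.mulVec x)) ∧
    (∀ x ∈ Submodule.span ℝ {u} ⊔ Ur,
      skDualSemi R Θ Ur (A.mulVec x) ≤
        (1 / Real.sqrt (1 - ε)) * (βr + ε * β) * normR R x) := by
  have hε1' : (0:ℝ) < 1 - ε := by linarith
  have hε1'' : (0:ℝ) < 1 + ε := by linarith
  have hs1 : 0 < Real.sqrt (1 + ε) := Real.sqrt_pos.2 hε1''
  have hs2 : 0 < Real.sqrt (1 - ε) := Real.sqrt_pos.2 hε1'
  set Y := Ur ⊔ Submodule.span ℝ
      ((fun x => R⁻¹.mulVec (b - A.mulVec x)) '' (Ur : Set (Fin n → ℝ))) with hYdef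
  have hb_mem : R⁻¹.mulVec b ∈ Y := by
    apply le_sup_right (α := Submodule ℝ (Fin n → ℝ))
    apply Submodule.subset_span
    exact ⟨0, Ur.zero_mem, by simp [Matrix.mulVec_zero]⟩
  have hz_mem : ∀ v ∈ Ur, R⁻¹.mulVec (A.mulVec v) ∈ Y := by
    intro v hv
    have h1 : R⁻¹.mulVec (b - A.mulVec v) ∈ Y :=
      le_sup_right (α := Submodule ℝ (Fin n → ℝ)) (Submodule.subset_span ⟨v, hv, rfl⟩)
    have h2 : R⁻¹.mulVec (A.mulVec v)
        = R⁻¹.mulVec b - R⁻¹.mulVec (b - A.mulVec v) := by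
      rw [Matrix.mulVec_sub]; abel
    rw [h2]
    exact sub_mem hb_mem h1
  have hupper : ∀ z ∈ Y, norm2 (Θ.mulVec z) ≤ Real.sqrt (1 + ε) * normR R z := by
    intro z hz
    have h := abs_le.1 (hemb z hz z hz)
    have hip : ipR R z z = normR R z * normR R z := by
      rw [← normR_sq hR]; ring
    have h2 : Θ.mulVec z ⬝ᵥ Θ.mulVec z ≤ (1 + ε) * (normR R z * normR R z) := by
      nlinarith [h.1]
    calc norm2 (Θ.mulVec z) = Real.sqrt (Θ.mulVec z ⬝ᵥ Θ.mulVec z) := rfl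
      _ ≤ Real.sqrt ((1 + ε) * (normR R z * normR R z)) := Real.sqrt_le_sqrt h2
      _ = Real.sqrt (1 + ε) * normR R z := by
          rw [Real.sqrt_mul (le_of_lt hε1''), Real.sqrt_mul_self (normR_nonneg _)]
  have hlower : ∀ z ∈ Y, Real.sqrt (1 - ε) * normR R z ≤ norm2 (Θ.mulVec z) := by
    intro z hz
    have h := abs_le.1 (hemb z hz z hz)
    have hip : ipR R z z = normR R z * normR R z := by
      rw [← normR_sq hR]; ring
    have h2 : (1 - ε) * (normR R z * normR R z) ≤ Θ.mulVec z ⬝ᵥ Θ.mulVec z := by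
      nlinarith [h.2]
    calc Real.sqrt (1 - ε) * normR R z
        = Real.sqrt ((1 - ε) * (normR R z * normR R z)) := by
          rw [Real.sqrt_mul (le_of_lt hε1'), Real.sqrt_mul_self (normR_nonneg _)]
      _ ≤ Real.sqrt (Θ.mulVec z ⬝ᵥ Θ.mulVec z) := Real.sqrt_le_sqrt h2
      _ = norm2 (Θ.mulVec z) := rfl
  haveI : Nonempty Ur := ⟨0⟩
  constructor
  · -- α bound
    intro x hx
    set y := A.mulVec x with hy
    set z := R⁻¹.mulVec y with hz
    have hzY : z ∈ Y := hz_mem x hx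
    have hnd : normDual R y = normR R z := normDual_eq hR y
    have hskd0 : 0 ≤ skDualSemi R Θ Ur y := skDualSemi_nonneg hR Θ Ur y
    have hnd0 : 0 ≤ normDual R y := Real.sqrt_nonneg _
    have step1 : dualSemi R Ur y
        ≤ Real.sqrt (1 + ε) * skDualSemi R Θ Ur y + ε * normDual R y := by
      rw [dualSemi]
      apply ciSup_le
      intro w
      by_cases hw0 : (w : Fin n → ℝ) = 0
      · rw [hw0]
        simp only [dotProduct_zero, abs_zero, zero_div]
        positivity
      · have hwpos : 0 < normR R (w : Fin n → ℝ) := normR_pos hR hw0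
        have hwY : (w : Fin n → ℝ) ∈ Y := le_sup_left (α := Submodule ℝ (Fin n → ℝ)) w.2
        have hΘwpos : 0 < norm2 (Θ.mulVec (w : Fin n → ℝ)) :=
          lt_of_lt_of_le (mul_pos hs2 hwpos) (hlower _ hwY)
        have hcross := hemb z hzY w hwY
        have hipz : ipR R z (w : Fin n → ℝ) = y ⬝ᵥ (w : Fin n → ℝ) := ipR_inv hR y w
        rw [hipz] at hcross
        have h1 : |y ⬝ᵥ (w : Fin n → ℝ)|
            ≤ |Θ.mulVec z ⬝ᵥ Θ.mulVec (w : Fin n → ℝ)|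
              + ε * normR R z * normR R (w : Fin n → ℝ) := by
          have habs := abs_sub_abs_le_abs_sub (y ⬝ᵥ (w : Fin n → ℝ))
            (Θ.mulVec z ⬝ᵥ Θ.mulVec (w : Fin n → ℝ))
          linarith
        have h4 : |Θ.mulVec z ⬝ᵥ Θ.mulVec (w : Fin n → ℝ)| / normR R (w : Fin n → ℝ)
            ≤ Real.sqrt (1 + ε) *
              (|Θ.mulVec z ⬝ᵥ Θ.mulVec (w : Fin n → ℝ)| /
                norm2 (Θ.mulVec (w : Fin n → ℝ))) := by
          rw [mul_div_assoc'] -- √(1+ε) * |dot| / norm2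
          rw [div_le_div_iff₀ hwpos hΘwpos]
          have hub := hupper _ hwY
          nlinarith [abs_nonneg (Θ.mulVec z ⬝ᵥ Θ.mulVec (w : Fin n → ℝ))]
        have h5 := mul_le_mul_of_nonneg_left (le_skDualSemi R Θ Ur y w)
          (Real.sqrt_nonneg (1 + ε))
        have h2 : |y ⬝ᵥ (w : Fin n → ℝ)| / normR R (w : Fin n → ℝ)
            ≤ |Θ.mulVec z ⬝ᵥ Θ.mulVec (w : Fin n → ℝ)| / normR R (w : Fin n → ℝ)
              + ε * normR R z := by
          rw [div_add' _ _ _ hwpos.ne', div_le_div_iff₀ hwpos hwpos]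
          nlinarith [hwpos]
        rw [hnd]
        linarith
    have step2 : normDual R y ≤ a * dualSemi R Ur y := ha x hx
    have hds0 : 0 ≤ dualSemi R Ur y := dualSemi_nonneg hR Ur y
    have step3 : (1 - ε * a) * dualSemi R Ur y
        ≤ Real.sqrt (1 + ε) * skDualSemi R Θ Ur y := by
      nlinarith [mul_le_mul_of_nonneg_left step2 hε0]
    by_cases hcase : 0 ≤ 1 - ε * a
    · have h6 : (1 - ε * a) * (αr * normR R x) ≤ (1 - ε * a) * dualSemi R Ur y :=
        mul_le_mul_of_nonneg_left (hαr x hx) hcase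
      have heq : (1 / Real.sqrt (1 + ε)) * ((1 - ε * a) * αr) * normR R x
          = ((1 - ε * a) * (αr * normR R x)) / Real.sqrt (1 + ε) := by ring
      rw [heq, div_le_iff₀ hs1]
      nlinarith
    · push_neg at hcase
      have e1 : (1 - ε * a) * αr ≤ 0 :=
        mul_nonpos_of_nonpos_of_nonneg (le_of_lt hcase) hαr0
      have e2 : (1 / Real.sqrt (1 + ε)) * ((1 - ε * a) * αr) ≤ 0 :=
        mul_nonpos_of_nonneg_of_nonpos (by positivity) e1
      have e3 : (1 / Real.sqrt (1 + ε)) * ((1 - ε * a) * αr) * normR R x ≤ 0 :=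
        mul_nonpos_of_nonpos_of_nonneg e2 (normR_nonneg _)
      exact e3.trans hskd0
  · -- β bound
    intro x hx
    by_cases hx0 : x = 0
    · subst hx0
      have hL : skDualSemi R Θ Ur (A.mulVec 0) = 0 := by
        rw [skDualSemi]
        simp only [Matrix.mulVec_zero, zero_dotProduct, abs_zero, zero_div]
        exact ciSup_const
      have hRn : normR R 0 = 0 := by
        simp [normR, ipR, Matrix.mulVec_zero]
      rw [hL, hRn, mul_zero]
    · set y := A.mulVec x with hy
      set z := R⁻¹.mulVec y with hz
      have hnx : 0 < normR R x := normR_pos hR hx0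
      have hzY : z ∈ Y := by
        obtain ⟨p, hp, v, hv, rfl⟩ := Submodule.mem_sup.1 hx
        obtain ⟨c, rfl⟩ := Submodule.mem_span_singleton.1 hp
        have hyeq : A.mulVec (c • u + v) = c • b + A.mulVec v := by
          rw [Matrix.mulVec_add, Matrix.mulVec_smul, hu]
        rw [hz, hy, hyeq, Matrix.mulVec_add, Matrix.mulVec_smul]
        exact add_mem (Submodule.smul_mem _ c hb_mem) (hz_mem v hv)
      have hnd : normDual R y = normR R z := normDual_eq hR y
      have hds0 : 0 ≤ dualSemi R Ur y := dualSemi_nonneg hR Ur y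
      have hnd0 : 0 ≤ normDual R y := Real.sqrt_nonneg _
      have hβr0 : 0 ≤ βr := by nlinarith [hβr x hx]
      have hβ0 : 0 ≤ β := by nlinarith [hβ x]
      have hsum0 : 0 ≤ βr + ε * β := by positivity
      rw [skDualSemi]
      apply ciSup_le
      intro w
      by_cases hw0 : (w : Fin n → ℝ) = 0
      · rw [hw0]
        simp only [Matrix.mulVec_zero, dotProduct_zero, abs_zero, zero_div]
        positivity
      · have hwpos : 0 < normR R (w : Fin n → ℝ) := normR_pos hR hw0
        have hwY : (w : Fin n → ℝ) ∈ Y := le_sup_left (α := Submodule ℝ (Fin n → ℝ)) w.2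
        have hcross := hemb z hzY w hwY
        have hipz : ipR R z (w : Fin n → ℝ) = y ⬝ᵥ (w : Fin n → ℝ) := ipR_inv hR y w
        rw [hipz] at hcross
        have h1 : |Θ.mulVec z ⬝ᵥ Θ.mulVec (w : Fin n → ℝ)|
            ≤ |y ⬝ᵥ (w : Fin n → ℝ)| + ε * normR R z * normR R (w : Fin n → ℝ) := by
          have habs := abs_sub_abs_le_abs_sub
            (Θ.mulVec z ⬝ᵥ Θ.mulVec (w : Fin n → ℝ)) (y ⬝ᵥ (w : Fin n → ℝ))
          rw [abs_sub_comm] at habs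
          linarith
        have h2 : |y ⬝ᵥ (w : Fin n → ℝ)| ≤ dualSemi R Ur y * normR R (w : Fin n → ℝ) :=
          (div_le_iff₀ hwpos).1 (le_dualSemi hR Ur y w)
        have h3 : dualSemi R Ur y ≤ βr * normR R x := hβr x hx
        have h4 : normR R z ≤ β * normR R x := hnd ▸ hβ x
        have hN : |Θ.mulVec z ⬝ᵥ Θ.mulVec (w : Fin n → ℝ)|
            ≤ ((βr + ε * β) * normR R x) * normR R (w : Fin n → ℝ) := by
          have h2' : dualSemi R Ur y * normR R (w : Fin n → ℝ)
              ≤ (βr * normR R x) * normR R (w : Fin n → ℝ) :=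
            mul_le_mul_of_nonneg_right h3 hwpos.le
          have h4' : ε * normR R z * normR R (w : Fin n → ℝ)
              ≤ ε * (β * normR R x) * normR R (w : Fin n → ℝ) :=
            mul_le_mul_of_nonneg_right (mul_le_mul_of_nonneg_left h4 hε0) hwpos.le
          nlinarith
        have hden : Real.sqrt (1 - ε) * normR R (w : Fin n → ℝ)
            ≤ norm2 (Θ.mulVec (w : Fin n → ℝ)) := hlower _ hwY
        have hNn : 0 ≤ (βr + ε * β) * normR R x * normR R (w : Fin n → ℝ) := by positivity
        have hfin := div_le_div₀ hNn hN (mul_pos hs2 hwpos) hden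
        have heq : ((βr + ε * β) * normR R x * normR R (w : Fin n → ℝ))
            / (Real.sqrt (1 - ε) * normR R (w : Fin n → ℝ))
            = (1 / Real.sqrt (1 - ε)) * (βr + ε * β) * normR R x := by
          rw [mul_div_mul_right _ _ hwpos.ne']
          ring
        rw [heq] at hfin
        exact hfin
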